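/- Let h > 0, let 0 = t₀ < t₁ < ⋯ < t_N = 1 be a partition of I = (0,1) into subintervals γᵢ = (tᵢ₋₁, tᵢ) each of length at most h, let v : [0,1] → ℝ be absolutely continuous with square-integrable derivative g, choose points xᵢ ∈ γᵢ, and let v_h = ∑_{i=1}^N v(xᵢ) 1_{γᵢ} be the piecewise constant interpolant. Then ∫₀¹ |v(x) − v_h(x)|² dx ≤ h² · ∫₀¹ g(t)² dt. -/

import Mathlib

open MeasureTheory Set Finset

private lemma t_mono_aux {N : ℕ} {t : ℕ → ℝ} (hmono : ∀ i < N, t i < t (i + 1)) :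
    ∀ i j : ℕ, i ≤ j → j ≤ N → t i ≤ t j := by
  intro i j hij hjN
  induction j with
  | zero => simp_all
  | succ k ih =>
    rcases Nat.eq_or_lt_of_le hij with rfl | h
    · exact le_rfl
    · exact le_trans (ih (Nat.lt_succ_iff.1 h) (le_trans (Nat.le_succ k) hjN))
        (hmono k (by omega)).le

private lemma cs_Ioc {a b : ℝ} (hab : a ≤ b) {g : ℝ → ℝ}
    (hg : IntegrableOn g (Ioc a b)) (hg2 : IntegrableOn (fun s => g s ^ 2) (Ioc a b)) :
    (∫ s in Ioc a b, |g s|) ^ 2 ≤ (b - a) * ∫ s in Ioc a b, g s ^ 2 := by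
  have h2 : (2:ℝ).HolderConjugate 2 := ⟨by norm_num, by norm_num, by norm_num⟩
  have hμ : volume (Ioc a b) = ENNReal.ofReal (b - a) := by simp [Real.volume_Ioc]
  haveI : IsFiniteMeasure (volume.restrict (Ioc a b)) :=
    ⟨by rw [Measure.restrict_apply_univ, hμ]; exact ENNReal.ofReal_lt_top⟩
  have hmeas : AEStronglyMeasurable (fun s => |g s|) (volume.restrict (Ioc a b)) := by
    simpa [Real.norm_eq_abs] using hg.aestronglyMeasurable.norm
  have hmemg : MemLp (fun s => |g s|) (ENNReal.ofReal 2) (volume.restrict (Ioc a b)) := by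
    rw [show ENNReal.ofReal (2:ℝ) = 2 by norm_num]
    rw [memLp_two_iff_integrable_sq hmeas]
    have : (fun s => |g s| ^ 2) = fun s => g s ^ 2 := funext fun s => sq_abs _
    rw [this]; exact hg2
  have hmem1 : MemLp (fun _ : ℝ => (1:ℝ)) (ENNReal.ofReal 2) (volume.restrict (Ioc a b)) :=
    memLp_const 1
  have key := integral_mul_le_Lp_mul_Lq_of_nonneg h2
    (ae_of_all _ fun _ => (zero_le_one : (0:ℝ) ≤ 1))
    (ae_of_all _ fun s => abs_nonneg (g s)) hmem1 hmemg
  have e1 : ∫ s in Ioc a b, (1:ℝ) * |g s| = ∫ s in Ioc a b, |g s| := by simp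
  have e2 : ∫ _ in Ioc a b, ((1:ℝ) ^ (2:ℝ)) = b - a := by
    simp [integral_const, hμ, ENNReal.toReal_ofReal (sub_nonneg.2 hab), hab]
  have e3 : (fun s => |g s| ^ (2:ℝ)) = fun s => g s ^ 2 := funext fun s => by
    rw [show (2:ℝ) = ((2:ℕ):ℝ) by norm_num, Real.rpow_natCast, sq_abs]
  rw [e1, e2, e3] at key
  have hI : 0 ≤ ∫ s in Ioc a b, g s ^ 2 := integral_nonneg fun s => sq_nonneg _
  have hL : 0 ≤ ∫ s in Ioc a b, |g s| := integral_nonneg fun s => abs_nonneg _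
  calc (∫ s in Ioc a b, |g s|) ^ 2
      ≤ ((b - a) ^ ((1:ℝ)/2) * (∫ s in Ioc a b, g s ^ 2) ^ ((1:ℝ)/2)) ^ 2 :=
        pow_le_pow_left₀ hL key 2
    _ = (b - a) * ∫ s in Ioc a b, g s ^ 2 := by
        rw [mul_pow, ← Real.sqrt_eq_rpow, ← Real.sqrt_eq_rpow,
          Real.sq_sqrt (sub_nonneg.2 hab), Real.sq_sqrt hI]

/-- L² (zeroth order) part of Lemma 1: for a partition of `(0,1)` into
subintervals of length at most `h` and `v_h` the piecewise constant interpolant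
of an absolutely continuous function `v` with square-integrable derivative `g`,
`∫₀¹ |v - v_h|² ≤ h² ∫₀¹ g²`. -/
theorem L2_interpolation_bound (h : ℝ) (hh : 0 < h)
    (N : ℕ) (t : ℕ → ℝ) (ht0 : t 0 = 0) (htN : t N = 1)
    (hmono : ∀ i < N, t i < t (i + 1))
    (hlen : ∀ i < N, t (i + 1) - t i ≤ h)
    (v g : ℝ → ℝ)
    (hg_int : IntegrableOn g (Icc (0:ℝ) 1))
    (hg_sq : IntegrableOn (fun s => g s ^ 2) (Icc (0:ℝ) 1))
    (hv : ∀ p ∈ Icc (0:ℝ) 1, ∀ q ∈ Icc (0:ℝ) 1, v q - v p = ∫ s in p..q, g s)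
    (xp : ℕ → ℝ) (hxp : ∀ i < N, xp i ∈ Ioc (t i) (t (i + 1)))
    (vh : ℝ → ℝ)
    (hvh : ∀ y, vh y =
      ∑ i ∈ Finset.range N, Set.indicator (Ioc (t i) (t (i + 1))) (fun _ => v (xp i)) y) :
    ∫ x in (0:ℝ)..1, |v x - vh x| ^ 2 ≤ h ^ 2 * ∫ s in (0:ℝ)..1, g s ^ 2 := by
  have ht_nonneg : ∀ i ≤ N, 0 ≤ t i := fun i hi =>
    ht0 ▸ t_mono_aux hmono 0 i (Nat.zero_le i) hi
  have ht_le_one : ∀ i ≤ N, t i ≤ 1 := fun i hi =>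
    htN ▸ t_mono_aux hmono i N hi le_rfl
  have hIccsub : ∀ i < N, Icc (t i) (t (i+1)) ⊆ Icc (0:ℝ) 1 := fun i hi =>
    Icc_subset_Icc (ht_nonneg i hi.le) (ht_le_one (i+1) hi)
  have hIocsub : ∀ i < N, Ioc (t i) (t (i+1)) ⊆ Icc (0:ℝ) 1 := fun i hi =>
    (Set.Ioc_subset_Icc_self).trans (hIccsub i hi)
  -- continuity of v on [0,1]
  have hgInt' : IntegrableOn g (uIcc (0:ℝ) 1) := by
    rw [Set.uIcc_of_le zero_le_one]; exact hg_int
  have hFcont : ContinuousOn (fun x => ∫ s in (0:ℝ)..x, g s) (Icc (0:ℝ) 1) := by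
    have := intervalIntegral.continuousOn_primitive_interval (a := (0:ℝ)) (b := 1) hgInt'
    rwa [Set.uIcc_of_le zero_le_one] at this
  have hvcont : ContinuousOn v (Icc (0:ℝ) 1) := by
    have heq : ∀ x ∈ Icc (0:ℝ) 1, v x = v 0 + ∫ s in (0:ℝ)..x, g s := fun x hx => by
      have := hv 0 (left_mem_Icc.2 zero_le_one) x hx; linarith
    exact ContinuousOn.congr (continuousOn_const.add hFcont) heq
  -- vh equals v (xp i) on each subinterval
  have hvh_eq : ∀ i < N, ∀ x ∈ Ioc (t i) (t (i+1)), vh x = v (xp i) := by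
    intro i hi x hx
    rw [hvh]
    rw [Finset.sum_eq_single i]
    · exact indicator_of_mem hx _
    · intro j hj hji
      apply indicator_of_notMem
      intro hxj
      rcases lt_or_gt_of_ne hji with hlt | hgt
      · have hle : t (j+1) ≤ t i := t_mono_aux hmono (j+1) i hlt hi.le
        exact absurd hxj.2 (not_le.2 (lt_of_le_of_lt hle hx.1))
      · have hle : t (i+1) ≤ t j := t_mono_aux hmono (i+1) j hgt (Finset.mem_range.1 hj).le
        exact absurd hxj.1 (not_lt.2 (le_trans hx.2 hle))
    · intro hiN; exact absurd (Finset.mem_range.2 hi) hiN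
  -- pointwise bound on each subinterval
  have hpt : ∀ i < N, ∀ x ∈ Ioc (t i) (t (i+1)),
      |v x - vh x| ^ 2 ≤ h * ∫ s in Ioc (t i) (t (i+1)), g s ^ 2 := by
    intro i hi x hx
    have hgi : IntegrableOn g (Ioc (t i) (t (i+1))) := hg_int.mono_set (hIocsub i hi)
    have hg2i : IntegrableOn (fun s => g s ^ 2) (Ioc (t i) (t (i+1))) :=
      hg_sq.mono_set (hIocsub i hi)
    have hle : t i ≤ t (i+1) := (hmono i hi).le
    have hxpi := hxp i hi
    have hdiff : v x - v (xp i) = ∫ s in (xp i)..x, g s :=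
      hv (xp i) (hIocsub i hi hxpi) x (hIocsub i hi hx)
    have habs : |v x - vh x| ≤ ∫ s in Ioc (t i) (t (i+1)), |g s| := by
      rw [hvh_eq i hi x hx, hdiff]
      calc |∫ s in (xp i)..x, g s| ≤ ∫ s in Set.uIoc (xp i) x, |g s| := by
            simpa [Real.norm_eq_abs] using
              intervalIntegral.norm_integral_le_integral_norm_uIoc
                (f := g) (a := xp i) (b := x) (μ := volume)
        _ ≤ ∫ s in Ioc (t i) (t (i+1)), |g s| := by
            apply setIntegral_mono_set (hgi.abs)
              (ae_of_all _ fun s => abs_nonneg (g s))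
            apply HasSubset.Subset.eventuallyLE
            show Ioc (min (xp i) x) (max (xp i) x) ⊆ _
            exact Ioc_subset_Ioc (le_min hxpi.1.le hx.1.le) (max_le hxpi.2 hx.2)
    have hInn : 0 ≤ ∫ s in Ioc (t i) (t (i+1)), g s ^ 2 :=
      integral_nonneg fun s => sq_nonneg _
    calc |v x - vh x| ^ 2 ≤ (∫ s in Ioc (t i) (t (i+1)), |g s|) ^ 2 :=
          pow_le_pow_left₀ (abs_nonneg _) habs 2
      _ ≤ (t (i+1) - t i) * ∫ s in Ioc (t i) (t (i+1)), g s ^ 2 := cs_Ioc hle hgi hg2i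
      _ ≤ h * ∫ s in Ioc (t i) (t (i+1)), g s ^ 2 :=
          mul_le_mul_of_nonneg_right (hlen i hi) hInn
  -- integrability of the error on each subinterval
  have hfi : ∀ i < N, IntegrableOn (fun x => |v x - vh x| ^ 2) (Ioc (t i) (t (i+1))) := by
    intro i hi
    have hcont : ContinuousOn (fun x => |v x - v (xp i)| ^ 2) (Icc (t i) (t (i+1))) := by
      apply ContinuousOn.pow
      exact ((hvcont.mono (hIccsub i hi)).sub continuousOn_const).abs
    have h1 : IntegrableOn (fun x => |v x - v (xp i)| ^ 2) (Ioc (t i) (t (i+1))) :=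
      (hcont.integrableOn_Icc).mono_set Ioc_subset_Icc_self
    exact h1.congr_fun (fun x hx => by rw [hvh_eq i hi x hx]) measurableSet_Ioc
  -- bound on each subinterval integral
  have hint_i : ∀ i < N, ∫ x in t i..t (i+1), |v x - vh x| ^ 2 ≤
      h ^ 2 * ∫ s in t i..t (i+1), g s ^ 2 := by
    intro i hi
    have hle : t i ≤ t (i+1) := (hmono i hi).le
    have hInn : 0 ≤ ∫ s in Ioc (t i) (t (i+1)), g s ^ 2 :=
      integral_nonneg fun s => sq_nonneg _
    rw [intervalIntegral.integral_of_le hle, intervalIntegral.integral_of_le hle]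
    have hμfin : volume (Ioc (t i) (t (i+1))) < ⊤ := by
      rw [Real.volume_Ioc]; exact ENNReal.ofReal_lt_top
    calc ∫ x in Ioc (t i) (t (i+1)), |v x - vh x| ^ 2
        ≤ ∫ _ in Ioc (t i) (t (i+1)), (h * ∫ s in Ioc (t i) (t (i+1)), g s ^ 2) := by
          apply setIntegral_mono_on (hfi i hi) (integrableOn_const hμfin.ne)
            measurableSet_Ioc
          exact hpt i hi
      _ = (t (i+1) - t i) * (h * ∫ s in Ioc (t i) (t (i+1)), g s ^ 2) := by
          rw [setIntegral_const, Real.volume_real_Ioc_of_le hle,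
            smul_eq_mul]
      _ ≤ h * (h * ∫ s in Ioc (t i) (t (i+1)), g s ^ 2) :=
          mul_le_mul_of_nonneg_right (hlen i hi) (mul_nonneg hh.le hInn)
      _ = h ^ 2 * ∫ s in Ioc (t i) (t (i+1)), g s ^ 2 := by ring
  -- sum over subintervals
  have hIIf : ∀ i < N, IntervalIntegrable (fun x => |v x - vh x| ^ 2) volume (t i) (t (i+1)) := by
    intro i hi
    rw [intervalIntegrable_iff, uIoc_of_le (hmono i hi).le]
    exact hfi i hi
  have hIIg : ∀ i < N, IntervalIntegrable (fun s => g s ^ 2) volume (t i) (t (i+1)) := by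
    intro i hi
    rw [intervalIntegrable_iff, uIoc_of_le (hmono i hi).le]
    exact hg_sq.mono_set (hIocsub i hi)
  have hsumf := intervalIntegral.sum_integral_adjacent_intervals (a := t) (n := N)
    (μ := volume) hIIf
  have hsumg := intervalIntegral.sum_integral_adjacent_intervals (a := t) (n := N)
    (μ := volume) hIIg
  rw [ht0, htN] at hsumf hsumg
  rw [← hsumf, ← hsumg, Finset.mul_sum]
  apply Finset.sum_le_sum
  intro i hi
  exact hint_i i (Finset.mem_range.1 hi)
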